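/- arXiv:2103.06177 — 6 statements merged into one kernel-verified Lean document; each statement's English description precedes it below -/
import Mathlib

section
/- Let 0 ≤ δ_A ≤ δ_B < 1 and Δ = (1-δ_B)/(1-δ_A). Then (1-δ_A)·Δ²/6 + (1-δ_B)·(3-2Δ)/6 ≥ (1-δ_A)·Δ³/6 + (1-δ_B)·Δ·(3-2Δ²)/6. -/
theorem stmt_7 (δA δB : ℝ) (h0 : 0 ≤ δA) (h1 : δA ≤ δB) (h2 : δB < 1)
    (Δ : ℝ) (hΔ : Δ = (1 - δB) / (1 - δA)) :
    (1 - δA) * Δ ^ 2 / 6 + (1 - δB) * (3 - 2 * Δ) / 6 ≥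
      (1 - δA) * Δ ^ 3 / 6 + (1 - δB) * Δ * (3 - 2 * Δ ^ 2) / 6 := by
  have ha : 0 < 1 - δA := by linarith
  have hb : 1 - δB = Δ * (1 - δA) := by
    rw [hΔ]; field_simp
  have hΔ0 : 0 ≤ Δ := by
    rw [hΔ]; exact div_nonneg (by linarith) ha.le
  rw [hb]
  nlinarith [mul_nonneg (mul_nonneg (mul_nonneg (sq_nonneg (Δ - 1)) (by linarith : (0:ℝ) ≤ 2*Δ+3)) hΔ0) ha.le]
end

section
/- The function R(δ_A, δ_B) = (1-δ_A)·Δ²/6 + (1-δ_B)·(3-2Δ)/6, where Δ = (1-δ_B)/(1-δ_A), is monotone decreasing in δ_B on the region 0 ≤ δ_A ≤ δ_B < 1 (for fixed δ_A). -/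
theorem stmt_10 (δA : ℝ) (h0 : 0 ≤ δA)
    (R : ℝ → ℝ)
    (hR : ∀ δB, R δB = (1 - δA) * ((1 - δB) / (1 - δA)) ^ 2 / 6 +
      (1 - δB) * (3 - 2 * ((1 - δB) / (1 - δA))) / 6) :
    ∀ δB₁ δB₂, δA ≤ δB₁ → δB₁ ≤ δB₂ → δB₂ < 1 → R δB₂ ≤ R δB₁ := by
  intro δB₁ δB₂ h1 h2 h3
  have ha : 0 < 1 - δA := by linarith
  rw [hR, hR]
  rw [← add_div, ← add_div, div_le_div_iff₀ (by norm_num) (by norm_num)]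
  have key : ∀ x : ℝ, (1 - δA) * (x / (1 - δA)) ^ 2 = x ^ 2 / (1 - δA) := by
    intro x; field_simp
  rw [key, key]
  have h4 : (1 - δB₂) ≤ (1 - δB₁) := by linarith
  have h5 : (1 - δB₁) ≤ (1 - δA) := by linarith
  have h6 : 0 < 1 - δB₂ := by linarith
  rw [div_add' _ _ _ ha.ne', div_add' _ _ _ ha.ne', div_mul_eq_mul_div, div_mul_eq_mul_div,
    div_le_div_iff₀ ha ha]
  have hx : ∀ x : ℝ, x * (3 - 2 * (x / (1 - δA))) * (1 - δA) = x * (3 * (1 - δA) - 2 * x) := by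
    intro x; field_simp
  nlinarith [hx (1 - δB₁), hx (1 - δB₂), mul_nonneg (sub_nonneg.2 h4) (sub_nonneg.2 h5),
    sq_nonneg ((1 - δB₁) - (1 - δB₂)), mul_pos h6 ha]
end

section
/- Consider a two-slot instance with bidders A (discount curve (1,0)) and B (discount curve (1,1)), with values v_A = (1-ε)·v_B for 0 < ε < 1 and v_B > 0. Under greedy allocation with GSP pricing, the bid profile (b_A, b_B) = (0, v_B) is a pure Nash equilibrium in which B gets the first slot and A the second; its welfare is v_B while the optimal welfare is (2-ε)·v_B, so the welfare ratio is 2-ε. -/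
/-- Two-slot instance: A has discount curve (1,0), B has discount curve (1,1).
Greedy allocation gives slot 1 to the strictly higher bidder (ties to B), GSP
charges the slot-1 winner the other bid and the slot-2 occupant nothing. -/
theorem stmt_11 (ε vA vB : ℝ) (hε0 : 0 < ε) (hε1 : ε < 1) (hvB : 0 < vB)
    (hvA : vA = (1 - ε) * vB)
    (uA uB : ℝ → ℝ → ℝ)
    -- A's utility: wins slot 1 iff bA > bB, paying bB; otherwise slot 2 with discount 0
    (huA : ∀ bA bB, uA bA bB = if bA > bB then vA - bB else 0 * (vA - 0))
    -- B's utility: if A wins slot 1, B gets slot 2 (discount 1, price 0); else slot 1 at price bA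
    (huB : ∀ bA bB, uB bA bB = if bA > bB then vB else vB - bA) :
    -- (0, vB) is a pure Nash equilibrium
    (∀ bA' ≥ (0:ℝ), uA bA' vB ≤ uA 0 vB) ∧
    (∀ bB' ≥ (0:ℝ), uB 0 bB' ≤ uB 0 vB) ∧
    -- B gets the first slot and A the second: equilibrium welfare is vB
    ¬((0:ℝ) > vB) ∧
    -- optimal welfare is (2-ε)·vB and the welfare ratio is 2-ε
    vA + vB = (2 - ε) * vB ∧
    (vA + vB) / vB = 2 - ε := by
  refine ⟨?_, ?_, ?_, ?_, ?_⟩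
  · intro bA' _
    rw [huA, huA, if_neg (by linarith : ¬(0:ℝ) > vB)]
    split
    · nlinarith
    · simp
  · intro bB' _
    rw [huB, huB]
    split <;> split <;> simp_all <;> linarith
  · linarith
  · nlinarith
  · rw [hvA]; field_simp; ring
end

section
/- For every ε ∈ (0, 1/2), the quantities EQ = 2 + ε + ε² − ε³ and OPT = 3 − 2ε − 2ε² satisfy OPT/EQ → 3/2 as ε → 0, and OPT > EQ for sufficiently small ε > 0. -/
theorem stmt_12 (EQ OPT : ℝ → ℝ)
    (hEQ : ∀ ε, EQ ε = 2 + ε + ε ^ 2 - ε ^ 3)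
    (hOPT : ∀ ε, OPT ε = 3 - 2 * ε - 2 * ε ^ 2) :
    Filter.Tendsto (fun ε => OPT ε / EQ ε) (nhdsWithin 0 (Set.Ioo (0:ℝ) (1/2)))
      (nhds (3 / 2)) ∧
    ∃ ε₀ > (0:ℝ), ∀ ε ∈ Set.Ioo (0:ℝ) ε₀, OPT ε > EQ ε := by
  constructor
  · have h : Filter.Tendsto (fun ε : ℝ => OPT ε / EQ ε) (nhds 0) (nhds (3 / 2)) := by
      have : Filter.Tendsto (fun ε : ℝ => (3 - 2 * ε - 2 * ε ^ 2) / (2 + ε + ε ^ 2 - ε ^ 3))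
          (nhds 0) (nhds ((3 - 2 * 0 - 2 * 0 ^ 2) / (2 + 0 + 0 ^ 2 - 0 ^ 3))) := by
        apply Filter.Tendsto.div
        · exact (Continuous.tendsto (by continuity) 0)
        · exact (Continuous.tendsto (by continuity) 0)
        · norm_num
      simp only [hEQ, hOPT]
      convert this using 2
      norm_num
    exact h.mono_left nhdsWithin_le_nhds
  · refine ⟨1/10, by norm_num, fun ε hε => ?_⟩
    obtain ⟨h1, h2⟩ := hε
    rw [hEQ, hOPT]
    nlinarith [sq_nonneg ε, pow_pos h1 3]
end

section
/- Let v_B = 1, δ_B = 1/2, and for δ_A ∈ [0, 1/2) set v_A(δ_A) = 1/(4(1-δ_A)²). Define f(δ_A) = (1/2 + v_A(δ_A)) / (1 + δ_A·v_A(δ_A)) = (2(1-δ_A)² + 1)/(δ_A + 4(1-δ_A)²). Then f is continuous on [0,1/2), f(0) = 3/4, and f(δ_A) → 1 as δ_A → 1/2; hence f attains values arbitrarily close to 3/4. -/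
theorem stmt_15 (vA f : ℝ → ℝ)
    (hvA : ∀ δA, vA δA = 1 / (4 * (1 - δA) ^ 2))
    (hf : ∀ δA, f δA = (1/2 + vA δA) / (1 + δA * vA δA))
    (hf' : ∀ δA ∈ Set.Ico (0:ℝ) (1/2),
      f δA = (2 * (1 - δA) ^ 2 + 1) / (δA + 4 * (1 - δA) ^ 2)) :
    ContinuousOn f (Set.Ico (0:ℝ) (1/2)) ∧
    f 0 = 3 / 4 ∧
    Filter.Tendsto f (nhdsWithin (1/2) (Set.Ico (0:ℝ) (1/2))) (nhds 1) ∧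
    ∀ η > (0:ℝ), ∃ δA ∈ Set.Ico (0:ℝ) (1/2), |f δA - 3/4| < η := by
  have hd : ∀ δ : ℝ, δ + 4 * (1 - δ) ^ 2 ≠ 0 := by
    intro δ
    nlinarith [sq_nonneg (δ - 7/8)]
  have hgcont : Continuous fun δ : ℝ => (2 * (1 - δ) ^ 2 + 1) / (δ + 4 * (1 - δ) ^ 2) :=
    Continuous.div (by continuity) (by continuity) hd
  have h0 : (0:ℝ) ∈ Set.Ico (0:ℝ) (1/2) := by constructor <;> norm_num
  have hf0 : f 0 = 3/4 := by rw [hf' 0 h0]; norm_num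
  refine ⟨?_, hf0, ?_, ?_⟩
  · exact (hgcont.continuousOn).congr hf'
  · have h1 : Filter.Tendsto (fun δ : ℝ => (2 * (1 - δ) ^ 2 + 1) / (δ + 4 * (1 - δ) ^ 2))
        (nhdsWithin (1/2) (Set.Ico (0:ℝ) (1/2))) (nhds 1) := by
      have := (hgcont.tendsto (1/2)).mono_left (nhdsWithin_le_nhds (s := Set.Ico (0:ℝ) (1/2)))
      convert this using 2
      norm_num
    refine h1.congr' ?_
    filter_upwards [self_mem_nhdsWithin] with δ hδ
    exact (hf' δ hδ).symm
  · intro η hη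
    exact ⟨0, h0, by rw [hf0]; simpa using hη⟩
end

section
/- If a game is (1/2, 1)-semismooth and social welfare is at least the sum of player utilities, then its Price of Anarchy is at most 4; if it is (1/2, μ)-semismooth, the Price of Anarchy is at most 2 + 2μ. -/
open Finset in
/-- Abstract semismoothness ⇒ PoA bound. Players ι, bid space B, utilities u,
welfare W, optimal welfare OPT. A deterministic deviation b' witnesses
(λ,μ)-semismoothness. Any pure Nash equilibrium b has OPT ≤ ((μ+1)/λ)·W b. -/
theorem stmt_18 {ι B : Type*} [Fintype ι] [DecidableEq ι]
    (u : ι → (ι → B) → ℝ) (W : (ι → B) → ℝ) (OPT : ℝ) (μ : ℝ) (hμ : 0 ≤ μ)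
    (b' : ι → B)
    -- (1/2, μ)-semismoothness
    (hsmooth : ∀ b : ι → B,
      ∑ i, u i (Function.update b i (b' i)) ≥ (1/2) * OPT - μ * W b)
    -- social welfare is at least the sum of player utilities
    (hW : ∀ b : ι → B, W b ≥ ∑ i, u i b) :
    ∀ b : ι → B, (∀ i (bi : B), u i (Function.update b i bi) ≤ u i b) →
      (OPT ≤ (2 + 2 * μ) * W b ∧ (μ = 1 → OPT ≤ 4 * W b)) := by
  intro b hNE
  have h1 : ∑ i, u i (Function.update b i (b' i)) ≤ ∑ i, u i b :=
    Finset.sum_le_sum fun i _ => hNE i (b' i)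
  have h2 := hsmooth b
  have h3 := hW b
  have key : OPT ≤ (2 + 2 * μ) * W b := by nlinarith
  exact ⟨key, fun hμ1 => by subst hμ1; nlinarith [key]⟩
end
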